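/- Let Y = {y₁,...,y_m} be points in a Euclidean space and x̄ a point such that strictly more than m/2 of the points yᵢ lie in the closed ball B_ε(x̄). For each i, let rᵢ = min{r ≥ 0 : |B_r(yᵢ) ∩ Y| > m/2}, and let i* minimize rᵢ. Then ‖y_{i*} - x̄‖ ≤ 3ε. -/
import Mathlib


open Finset

lemma aux_closed {m : ℕ} (f : Fin m → ℝ) (c : ℝ) :
    IsClosed {s : ℝ | c < ((Finset.univ.filter fun j => f j ≤ s).card : ℝ)} := by
  classical
  have h : {s : ℝ | c < ((Finset.univ.filter fun j => f j ≤ s).card : ℝ)} =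
      ⋃ A ∈ {A : Finset (Fin m) | c < (A.card : ℝ)}, ⋂ j ∈ A, Set.Ici (f j) := by
    ext s
    simp only [Set.mem_setOf_eq, Set.mem_iUnion, Set.mem_iInter, Set.mem_Ici]
    constructor
    · intro h
      exact ⟨Finset.univ.filter fun j => f j ≤ s, h,
        fun j hj => (Finset.mem_filter.mp hj).2⟩
    · rintro ⟨A, hA, hAs⟩
      refine lt_of_lt_of_le hA ?_
      exact_mod_cast Finset.card_le_card fun j hj =>
        Finset.mem_filter.mpr ⟨Finset.mem_univ _, hAs j hj⟩
  rw [h]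
  exact Set.Finite.isClosed_biUnion (Set.toFinite _)
    (fun A _ => isClosed_biInter fun j _ => isClosed_Ici)

/-- robust distance estimation with the Euclidean norm.  If strictly more
than `m/2` of the points `y i` lie in the closed ball `B_ε(x̄)`, and `r i` is the smallest
radius such that the ball `B_{r i}(y i)` contains strictly more than `m/2` of the points,
and `i*` minimizes `r`, then `‖y i* - x̄‖ ≤ 3ε`. -/
theorem robust_distance_estimation {d m : ℕ}
    (y : Fin m → EuclideanSpace ℝ (Fin d))
    (xbar : EuclideanSpace ℝ (Fin d)) (ε : ℝ) (hε : 0 < ε)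
    (hmaj : (m : ℝ) / 2 <
      ((Finset.univ.filter (fun j => ‖y j - xbar‖ ≤ ε)).card : ℝ))
    (r : Fin m → ℝ)
    (hr : ∀ i, r i = sInf {s : ℝ | 0 ≤ s ∧ (m : ℝ) / 2 <
      ((Finset.univ.filter (fun j => ‖y j - y i‖ ≤ s)).card : ℝ)})
    (istar : Fin m) (histar : ∀ i, r istar ≤ r i) :
    ‖y istar - xbar‖ ≤ 3 * ε := by
  classical
  set A : Finset (Fin m) := Finset.univ.filter (fun j => ‖y j - xbar‖ ≤ ε) with hA
  -- m > 0 and a point in the ε-ball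
  have hApos : 0 < A.card := by
    by_contra h
    push_neg at h
    interval_cases hc : A.card
    · simp [hc] at hmaj
      have : (0:ℝ) ≤ (m:ℝ)/2 := by positivity
      linarith
  obtain ⟨i0, hi0⟩ := Finset.card_pos.mp hApos
  have hi0' : ‖y i0 - xbar‖ ≤ ε := (Finset.mem_filter.mp hi0).2
  have hm : 0 < m := Fin.pos i0
  -- the defining set for center i
  set S : Fin m → Set ℝ := fun i => {s : ℝ | 0 ≤ s ∧ (m : ℝ) / 2 <
      ((Finset.univ.filter (fun j => ‖y j - y i‖ ≤ s)).card : ℝ)} with hS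
  have hbdd : ∀ i, BddBelow (S i) := fun i => ⟨0, fun s hs => hs.1⟩
  -- r istar ≤ 2ε
  have hr2 : r istar ≤ 2 * ε := by
    have h2e : 2 * ε ∈ S i0 := by
      constructor
      · positivity
      · refine lt_of_lt_of_le hmaj ?_
        have : A ⊆ Finset.univ.filter (fun j => ‖y j - y i0‖ ≤ 2 * ε) := by
          intro j hj
          have hj' : ‖y j - xbar‖ ≤ ε := (Finset.mem_filter.mp hj).2
          refine Finset.mem_filter.mpr ⟨Finset.mem_univ _, ?_⟩
          have := norm_sub_le_norm_sub_add_norm_sub (y j) xbar (y i0)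
          have h3 : ‖xbar - y i0‖ = ‖y i0 - xbar‖ := norm_sub_rev _ _
          linarith
        exact_mod_cast Finset.card_le_card this
    calc r istar ≤ r i0 := histar i0
      _ ≤ 2 * ε := by rw [hr i0]; exact csInf_le (hbdd i0) h2e
  -- r istar belongs to S istar
  have hmem : r istar ∈ S istar := by
    rw [hr istar]
    refine IsClosed.csInf_mem ?_ ?_ (hbdd istar)
    · have := (isClosed_Ici (a := (0:ℝ))).inter
        (aux_closed (fun j => ‖y j - y istar‖) ((m:ℝ)/2))
      exact this
    · -- nonempty: take the sup of all distances
      refine ⟨Finset.univ.sup' ⟨istar, Finset.mem_univ _⟩ (fun j => ‖y j - y istar‖), ?_, ?_⟩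
      · exact le_trans (norm_nonneg _)
          (Finset.le_sup' (fun j => ‖y j - y istar‖) (Finset.mem_univ istar))
      · have hfull : Finset.univ.filter (fun j => ‖y j - y istar‖ ≤
            Finset.univ.sup' ⟨istar, Finset.mem_univ _⟩ (fun j => ‖y j - y istar‖)) =
            Finset.univ := by
          refine Finset.eq_univ_iff_forall.mpr fun j => Finset.mem_filter.mpr
            ⟨Finset.mem_univ _, Finset.le_sup' (fun j => ‖y j - y istar‖) (Finset.mem_univ j)⟩
        rw [hfull, Finset.card_univ, Fintype.card_fin]
        have : (1:ℝ) ≤ (m:ℝ) := by exact_mod_cast hm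
        linarith
  -- the two majorities intersect
  set B : Finset (Fin m) := Finset.univ.filter (fun j => ‖y j - y istar‖ ≤ r istar) with hB
  have hBmaj : (m : ℝ) / 2 < (B.card : ℝ) := hmem.2
  have hinter : (A ∩ B).Nonempty := by
    rw [← Finset.card_pos]
    by_contra h
    push_neg at h
    interval_cases hc : (A ∩ B).card
    · have hu := Finset.card_union_add_card_inter A B
      rw [hc, add_zero] at hu
      have hUle : A.card + B.card ≤ m := by
        rw [← hu]
        simpa using Finset.card_le_univ (A ∪ B)
      have : ((A.card : ℝ) + (B.card : ℝ)) ≤ (m : ℝ) := by exact_mod_cast hUle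
      linarith
  obtain ⟨j, hj⟩ := hinter
  have hjA : ‖y j - xbar‖ ≤ ε := (Finset.mem_filter.mp (Finset.mem_inter.mp hj).1).2
  have hjB : ‖y j - y istar‖ ≤ r istar := (Finset.mem_filter.mp (Finset.mem_inter.mp hj).2).2
  have h1 := norm_sub_le_norm_sub_add_norm_sub (y istar) (y j) xbar
  have h2 : ‖y istar - y j‖ = ‖y j - y istar‖ := norm_sub_rev _ _
  linarith
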